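/- Let p be prime, q = p^h, and m ≥ 1. Let 𝓑_m be a subset of ℤ_q^n with q^{nm} elements whose reduction modulo p^m equals (ℤ_q/p^mℤ_q)^n. Then there exists a unique system of reduced Teichmüller polynomials g_{ij} (i ≥ m, 1 ≤ j ≤ n) in the nm variables x_{kl} (0 ≤ k ≤ m−1, 1 ≤ l ≤ n), each of total degree at most nm(q−1), such that every Y ∈ 𝓑_m equals X_m + Σ_{i≥m} (g_{i1}(X_m), …, g_{in}(X_m)) p^i, where X_m ∈ 𝓣_m is the Teichmüller lift of Y mod p^m. -/

import Mathlib

open WittVector MvPolynomial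

namespace BoxRep

variable (p : ℕ) [hp : Fact p.Prime] {k : Type} [Field k] [CharP k p] [PerfectRing k p]

local notation "W" => WittVector p k

/-- Division by `p` on Witt vectors over a perfect field. -/
noncomputable def pdiv (x : W) : W := (frobeniusEquiv p k).symm (x.shift 1)

lemma p_mul_pdiv (x : W) (hx : x.coeff 0 = 0) : (p : W) * pdiv p x = x := by
  have h1 : WittVector.frobenius ((frobeniusEquiv p k).symm (x.shift 1)) = x.shift 1 := by
    have := (frobeniusEquiv p k).apply_symm_apply (x.shift 1)
    simpa [WittVector.frobeniusEquiv_apply] using this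
  have h2 := WittVector.verschiebung_frobenius ((frobeniusEquiv p k).symm (x.shift 1))
  rw [h1] at h2
  rw [pdiv, mul_comm, ← h2]
  ext i
  cases i with
  | zero => simp [WittVector.verschiebung_coeff_zero, hx]
  | succ i => simp [WittVector.verschiebung_coeff_succ, WittVector.shift_coeff, add_comm]

lemma coeff_zero_eq (x : W) : x.coeff 0 = WittVector.constantCoeff x := rfl

lemma p_dvd_iff (x : W) : (p : W) ∣ x ↔ x.coeff 0 = 0 := by
  constructor
  · rintro ⟨y, rfl⟩
    rw [coeff_zero_eq, map_mul]
    have : (WittVector.constantCoeff (p : W)) = (p : k) := map_natCast _ p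
    rw [this, CharP.cast_eq_zero k p, zero_mul]
  · intro hx
    exact ⟨pdiv p x, (p_mul_pdiv p x hx).symm⟩

end BoxRep

namespace BoxRep

variable (p : ℕ) [hp : Fact p.Prime] {k : Type} [Field k] [CharP k p] [PerfectRing k p]

local notation "W" => WittVector p k
local notation "τ" => WittVector.teichmuller (R := k) p

lemma teich_eq_of_p_dvd {a b : k} (h : (p : W) ∣ (τ a - τ b)) : a = b := by
  have := (p_dvd_iff p _).mp h
  rw [coeff_zero_eq, map_sub] at this
  have ha : WittVector.constantCoeff (τ a) = a := teichmuller_coeff_zero p a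
  have hb : WittVector.constantCoeff (τ b) = b := teichmuller_coeff_zero p b
  rw [ha, hb, sub_eq_zero] at this
  exact this

/-- one step of the Teichmüller digit expansion -/
noncomputable def tstep (x : W) : W := pdiv p (x - τ (x.coeff 0))

lemma tstep_spec (x : W) : x = τ (x.coeff 0) + (p : W) * tstep p x := by
  have h0 : (x - τ (x.coeff 0)).coeff 0 = 0 := by
    rw [coeff_zero_eq, map_sub, ← coeff_zero_eq, ← coeff_zero_eq, teichmuller_coeff_zero, sub_self]
  rw [tstep, p_mul_pdiv p _ h0]; ring

/-- the `i`-th Teichmüller digit of a Witt vector -/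
noncomputable def digit (x : W) (i : ℕ) : k := ((tstep p)^[i] x).coeff 0

lemma digit_expansion (x : W) (N : ℕ) :
    x = (∑ i ∈ Finset.range N, (p : W) ^ i * τ (digit p x i)) + (p : W) ^ N * (tstep p)^[N] x := by
  induction N with
  | zero => simp
  | succ N ih =>
    have key := tstep_spec p ((tstep p)^[N] x)
    rw [Finset.sum_range_succ, Function.iterate_succ_apply',
      show (digit p x N) = ((tstep p)^[N] x).coeff 0 from rfl]
    linear_combination ih + (p : W) ^ N * key

lemma p_pow_regular (N : ℕ) {a b : W} (h : (p : W) ^ N * a = (p : W) ^ N * b) : a = b := by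
  have hpn : (p : W) ^ N ≠ 0 := pow_ne_zero _ (WittVector.p_nonzero p k)
  exact mul_left_cancel₀ hpn h

/-- uniqueness of finite Teichmüller expansions mod `p^N` -/
lemma digits_unique (N : ℕ) (a b : ℕ → k)
    (h : (p : W) ^ N ∣ (∑ i ∈ Finset.range N, (p : W) ^ i * τ (a i))
        - ∑ i ∈ Finset.range N, (p : W) ^ i * τ (b i)) :
    ∀ i < N, a i = b i := by
  induction N generalizing a b with
  | zero => intro i hi; omega
  | succ N ih =>
    obtain ⟨c, hc⟩ := h
    rw [Finset.sum_range_succ' (fun i => (p : W) ^ i * τ (a i)) N,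
      Finset.sum_range_succ' (fun i => (p : W) ^ i * τ (b i)) N] at hc
    simp only [pow_zero, one_mul] at hc
    have hsum : ∀ u : ℕ → k,
        ∑ i ∈ Finset.range N, (p : W) ^ (i + 1) * τ (u (i + 1))
          = (p : W) * ∑ i ∈ Finset.range N, (p : W) ^ i * τ (u (i + 1)) := by
      intro u
      rw [Finset.mul_sum]
      exact Finset.sum_congr rfl fun i _ => by ring
    rw [hsum a, hsum b] at hc
    have h0 : a 0 = b 0 := by
      apply teich_eq_of_p_dvd p
      refine ⟨(p : W) ^ N * c - ((∑ i ∈ Finset.range N, (p : W) ^ i * τ (a (i + 1)))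
          - ∑ i ∈ Finset.range N, (p : W) ^ i * τ (b (i + 1))), ?_⟩
      linear_combination hc
    have htail : (p : W) ^ N ∣ (∑ i ∈ Finset.range N, (p : W) ^ i * τ (a (i + 1)))
        - ∑ i ∈ Finset.range N, (p : W) ^ i * τ (b (i + 1)) := by
      refine ⟨c, ?_⟩
      apply p_pow_regular p 1
      simp only [pow_one]
      rw [h0] at hc
      linear_combination hc
    have := ih (fun i => a (i + 1)) (fun i => b (i + 1)) htail
    intro i hi
    cases i with
    | zero => exact h0
    | succ i => exact this i (by omega)

end BoxRep

namespace BoxRep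

variable (p : ℕ) [hp : Fact p.Prime] {k : Type} [Field k] [CharP k p] [PerfectRing k p]
  [Fintype k] {σ : Type} [Fintype σ] [DecidableEq σ]

local notation "W" => WittVector p k
local notation "τ" => WittVector.teichmuller (R := k) p

/-- a reduced polynomial representing a given function -/
noncomputable def polyOf (f : (σ → k) → k) : MvPolynomial σ k :=
  (((LinearMap.range_eq_top (f := MvPolynomial.evalᵢ σ k)).mp
    (MvPolynomial.range_evalᵢ σ k)) f).choose.1

lemma polyOf_mem (f : (σ → k) → k) :
    polyOf f ∈ MvPolynomial.restrictDegree σ k (Fintype.card k - 1) :=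
  (((LinearMap.range_eq_top (f := MvPolynomial.evalᵢ σ k)).mp
    (MvPolynomial.range_evalᵢ σ k)) f).choose.2

lemma eval_polyOf (f : (σ → k) → k) (v : σ → k) : eval v (polyOf f) = f v := by
  have := (((LinearMap.range_eq_top (f := MvPolynomial.evalᵢ σ k)).mp
    (MvPolynomial.range_evalᵢ σ k)) f).choose_spec
  exact congrFun this v

lemma reduced_unique {P Q : MvPolynomial σ k}
    (hP : P ∈ MvPolynomial.restrictDegree σ k (Fintype.card k - 1))
    (hQ : Q ∈ MvPolynomial.restrictDegree σ k (Fintype.card k - 1))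
    (h : ∀ v : σ → k, eval v P = eval v Q) : P = Q := by
  have := MvPolynomial.eq_zero_of_eval_eq_zero σ k (P - Q)
    (fun v => by rw [map_sub, h v, sub_self]) (sub_mem hP hQ)
  exact sub_eq_zero.mp this

end BoxRep

namespace BoxRep

variable (p : ℕ) [hp : Fact p.Prime] {k : Type} [Field k] [CharP k p] [PerfectRing k p]
  [Fintype k] {σ : Type} [Fintype σ] [DecidableEq σ]

local notation "W" => WittVector p k
local notation "τ" => WittVector.teichmuller (R := k) p

/-- coefficientwise Teichmüller lift of a polynomial -/
noncomputable def liftPoly (P : MvPolynomial σ k) : MvPolynomial σ W :=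
  ∑ d ∈ P.support, MvPolynomial.monomial d (τ (P.coeff d))

lemma coeff_liftPoly (P : MvPolynomial σ k) (d : σ →₀ ℕ) :
    (liftPoly p P).coeff d = τ (P.coeff d) := by
  classical
  rw [liftPoly, MvPolynomial.coeff_sum]
  simp only [MvPolynomial.coeff_monomial]
  by_cases hd : d ∈ P.support
  · rw [Finset.sum_eq_single d (fun b _ hb => if_neg hb) (fun h => (h hd).elim), if_pos rfl]
  · rw [Finset.sum_eq_zero, MvPolynomial.notMem_support_iff.mp hd, teichmuller_zero]
    intro b hb
    rw [if_neg]; rintro rfl; exact hd hb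

lemma map_liftPoly (P : MvPolynomial σ k) :
    MvPolynomial.map (WittVector.constantCoeff (p := p)) (liftPoly p P) = P := by
  ext d
  rw [MvPolynomial.coeff_map, coeff_liftPoly, ← coeff_zero_eq, teichmuller_coeff_zero]

lemma support_liftPoly (P : MvPolynomial σ k) : (liftPoly p P).support ⊆ P.support := by
  intro d hd
  rw [MvPolynomial.mem_support_iff] at hd ⊢
  intro h
  rw [coeff_liftPoly, h, teichmuller_zero] at hd
  exact hd rfl

lemma coeff_liftPoly_mem (P : MvPolynomial σ k) (d : σ →₀ ℕ) :
    (liftPoly p P).coeff d ∈ Set.range (⇑(WittVector.teichmuller p (R := k))) :=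
  ⟨P.coeff d, (coeff_liftPoly p P d).symm⟩

lemma eval_liftPoly_teich (P : MvPolynomial σ k) (A : σ → k) :
    WittVector.constantCoeff (MvPolynomial.eval (fun v => τ (A v)) (liftPoly p P))
      = MvPolynomial.eval A P := by
  have h1 : MvPolynomial.eval (fun v => τ (A v)) (liftPoly p P)
      = MvPolynomial.eval₂ (RingHom.id W) (fun v => τ (A v)) (liftPoly p P) := rfl
  rw [h1, MvPolynomial.eval₂_comp_left (WittVector.constantCoeff (p := p))]
  have h2 : ∀ v, WittVector.constantCoeff (τ (A v)) = A v := fun v => teichmuller_coeff_zero p _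
  rw [MvPolynomial.eval₂_eq_eval_map]
  have h3 : (WittVector.constantCoeff (p := p) (R := k)).comp (RingHom.id W)
      = WittVector.constantCoeff := RingHom.comp_id _
  rw [h3, map_liftPoly]
  congr 1

lemma degreeOf_liftPoly (P : MvPolynomial σ k)
    (hP : P ∈ MvPolynomial.restrictDegree σ k (Fintype.card k - 1)) (v : σ) :
    (liftPoly p P).degreeOf v ≤ Fintype.card k - 1 := by
  rw [MvPolynomial.degreeOf_le_iff]
  intro d hd
  exact (MvPolynomial.mem_restrictDegree _ _ _).mp hP d (support_liftPoly p P hd) v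

lemma totalDegree_liftPoly (P : MvPolynomial σ k)
    (hP : P ∈ MvPolynomial.restrictDegree σ k (Fintype.card k - 1)) :
    (liftPoly p P).totalDegree ≤ Fintype.card σ * (Fintype.card k - 1) := by
  rw [MvPolynomial.totalDegree]
  apply Finset.sup_le
  intro d hd
  have hd' := support_liftPoly p P hd
  have hbound : ∀ v : σ, d v ≤ Fintype.card k - 1 :=
    fun v => (MvPolynomial.mem_restrictDegree _ _ _).mp hP d hd' v
  calc (d.sum fun _ e => e) = ∑ v : σ, d v := by
        rw [Finsupp.sum_fintype]; intro _; rfl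
  _ ≤ ∑ _v : σ, (Fintype.card k - 1) := Finset.sum_le_sum fun v _ => hbound v
  _ = Fintype.card σ * (Fintype.card k - 1) := by
        rw [Finset.sum_const, Finset.card_univ, smul_eq_mul]

end BoxRep

namespace BoxRep

variable (p : ℕ) [hp : Fact p.Prime] {k : Type} [Field k] [CharP k p] [PerfectRing k p]
  [Fintype k] {σ : Type} [Fintype σ] [DecidableEq σ] {n : ℕ}

local notation "W" => WittVector p k
local notation "τ" => WittVector.teichmuller (R := k) p

/-- the polynomial extracting the current digit of a stage function -/
noncomputable def stagePoly (F : (σ → k) → Fin n → W) (j : Fin n) : MvPolynomial σ W :=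
  liftPoly p (polyOf (fun A => (F A j).coeff 0))

lemma constantCoeff_eval_stagePoly (F : (σ → k) → Fin n → W) (j : Fin n) (A : σ → k) :
    WittVector.constantCoeff (MvPolynomial.eval (fun v => τ (A v)) (stagePoly p F j))
      = (F A j).coeff 0 := by
  rw [stagePoly, eval_liftPoly_teich, eval_polyOf]

/-- the tower of stage functions -/
noncomputable def stageF (F0 : (σ → k) → Fin n → W) : ℕ → (σ → k) → Fin n → W
  | 0 => F0
  | t + 1 => fun A j => pdiv p (stageF F0 t A j
      - MvPolynomial.eval (fun v => τ (A v)) (stagePoly p (stageF F0 t) j))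

lemma stage_step (F0 : (σ → k) → Fin n → W) (t : ℕ) (A : σ → k) (j : Fin n) :
    (p : W) * stageF p F0 (t + 1) A j
      = stageF p F0 t A j
        - MvPolynomial.eval (fun v => τ (A v)) (stagePoly p (stageF p F0 t) j) := by
  show (p : W) * pdiv p _ = _
  apply p_mul_pdiv
  rw [coeff_zero_eq, map_sub, constantCoeff_eval_stagePoly, coeff_zero_eq, sub_self]

lemma stage_expansion (F0 : (σ → k) → Fin n → W) (D : (σ → k) → Fin n → W) (m : ℕ)
    (hD : ∀ A j, D A j = (p : W) ^ m * F0 A j) (t : ℕ) (A : σ → k) (j : Fin n) :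
    D A j = (∑ s ∈ Finset.range t,
        MvPolynomial.eval (fun v => τ (A v)) (stagePoly p (stageF p F0 s) j) * (p : W) ^ (m + s))
      + (p : W) ^ (m + t) * stageF p F0 t A j := by
  induction t with
  | zero => simpa [stageF] using hD A j
  | succ t ih =>
    rw [Finset.sum_range_succ]
    have hs := stage_step p F0 t A j
    rw [ih]
    rw [pow_add, pow_add, pow_succ]
    linear_combination ((p : W) ^ m * (p:W) ^ t) * hs.symm

lemma stagePoly_coeff_mem (F : (σ → k) → Fin n → W) (j : Fin n) (d : σ →₀ ℕ) :
    (stagePoly p F j).coeff d ∈ Set.range (⇑(WittVector.teichmuller p (R := k))) :=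
  coeff_liftPoly_mem p _ d

lemma stagePoly_degreeOf (F : (σ → k) → Fin n → W) (j : Fin n) (v : σ) :
    (stagePoly p F j).degreeOf v ≤ Fintype.card k - 1 :=
  degreeOf_liftPoly p _ (polyOf_mem _) v

lemma stagePoly_totalDegree (F : (σ → k) → Fin n → W) (j : Fin n) :
    (stagePoly p F j).totalDegree ≤ Fintype.card σ * (Fintype.card k - 1) :=
  totalDegree_liftPoly p _ (polyOf_mem _)

end BoxRep

namespace BoxRep

variable (p : ℕ) [hp : Fact p.Prime] {k : Type} [Field k] [CharP k p] [PerfectRing k p]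
  [Fintype k] {σ : Type} [Fintype σ] [DecidableEq σ]

local notation "W" => WittVector p k
local notation "τ" => WittVector.teichmuller (R := k) p

lemma dvd_iff_digits (x : W) (m : ℕ) (a : ℕ → k) :
    (p : W) ^ m ∣ x - ∑ i ∈ Finset.range m, (p : W) ^ i * τ (a i)
      ↔ ∀ i < m, digit p x i = a i := by
  have hexp := digit_expansion p x m
  constructor
  · intro ⟨c, hc⟩
    apply digits_unique p m
    refine ⟨c - (tstep p)^[m] x, ?_⟩
    rw [mul_sub]
    rw [hexp] at hc
    linear_combination hc
  · intro hdig
    refine ⟨(tstep p)^[m] x, ?_⟩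
    have : ∑ i ∈ Finset.range m, (p : W) ^ i * τ (a i)
        = ∑ i ∈ Finset.range m, (p : W) ^ i * τ (digit p x i) := by
      apply Finset.sum_congr rfl
      intro i hi
      rw [hdig i (Finset.mem_range.mp hi)]
    rw [this]
    linear_combination hexp

lemma constantCoeff_eval_map (P : MvPolynomial σ W) (w : σ → W) :
    WittVector.constantCoeff (MvPolynomial.eval w P)
      = MvPolynomial.eval (fun v => WittVector.constantCoeff (w v))
          (MvPolynomial.map (WittVector.constantCoeff (p := p)) P) := by
  have h1 : MvPolynomial.eval w P = MvPolynomial.eval₂ (RingHom.id W) w P := rfl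
  rw [h1, MvPolynomial.eval₂_comp_left (WittVector.constantCoeff (p := p)),
    MvPolynomial.eval₂_eq_eval_map]
  have h3 : (WittVector.constantCoeff (p := p) (R := k)).comp (RingHom.id W)
      = WittVector.constantCoeff := RingHom.comp_id _
  rw [h3]
  congr 1

lemma teichPoly_ext (P Q : MvPolynomial σ W)
    (hPc : ∀ d, P.coeff d ∈ Set.range (⇑(WittVector.teichmuller p (R := k))))
    (hQc : ∀ d, Q.coeff d ∈ Set.range (⇑(WittVector.teichmuller p (R := k))))
    (hPd : ∀ v, P.degreeOf v ≤ Fintype.card k - 1)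
    (hQd : ∀ v, Q.degreeOf v ≤ Fintype.card k - 1)
    (h : ∀ A : σ → k,
      WittVector.constantCoeff (MvPolynomial.eval (fun v => τ (A v)) P)
        = WittVector.constantCoeff (MvPolynomial.eval (fun v => τ (A v)) Q)) :
    P = Q := by
  set φ := WittVector.constantCoeff (p := p) (R := k)
  have hmem : ∀ (R : MvPolynomial σ W), (∀ v, R.degreeOf v ≤ Fintype.card k - 1) →
      MvPolynomial.map φ R ∈ MvPolynomial.restrictDegree σ k (Fintype.card k - 1) := by
    intro R hR
    rw [MvPolynomial.mem_restrictDegree]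
    intro s hs v
    exact MvPolynomial.degreeOf_le_iff.mp (hR v) s (MvPolynomial.support_map_subset _ _ hs)
  have heval : ∀ A : σ → k, MvPolynomial.eval A (MvPolynomial.map φ P)
      = MvPolynomial.eval A (MvPolynomial.map φ Q) := by
    intro A
    have e1 := constantCoeff_eval_map p P (fun v => τ (A v))
    have e2 := constantCoeff_eval_map p Q (fun v => τ (A v))
    have hφτ : (fun v => WittVector.constantCoeff (τ (A v))) = A := by
      funext v; exact teichmuller_coeff_zero p _
    rw [hφτ] at e1 e2
    rw [← e1, ← e2]
    exact h A
  have hmap : MvPolynomial.map φ P = MvPolynomial.map φ Q :=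
    reduced_unique (hmem P hPd) (hmem Q hQd) heval
  ext d
  obtain ⟨a, ha⟩ := hPc d
  obtain ⟨b, hb⟩ := hQc d
  have : φ (P.coeff d) = φ (Q.coeff d) := by
    have := congrArg (fun R => MvPolynomial.coeff d R) hmap
    simpa [MvPolynomial.coeff_map] using this
  rw [← ha, ← hb] at this ⊢
  have h2 : a = b := by
    simpa only [φ, ← coeff_zero_eq, teichmuller_coeff_zero] using this
  rw [h2]

end BoxRep

namespace BoxRep

variable (p : ℕ) [hp : Fact p.Prime] {k : Type} [Field k] [CharP k p] [PerfectRing k p]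
  [Fintype k]

local notation "W" => WittVector p k
local notation "τ" => WittVector.teichmuller (R := k) p

theorem main (q m n : ℕ) (hq : Fintype.card k = q) (hm : 0 < m)
    (B : Set (Fin n → W))
    (hBcard : Nat.card B = q ^ (n * m))
    (hBsurj : ∀ z : Fin n → W, ∃ Y ∈ B, ∀ j, (p : W) ^ m ∣ Y j - z j) :
    ∃! g : {i : ℕ // m ≤ i} → Fin n → MvPolynomial (Fin m × Fin n) W,
      (∀ i j,
          (∀ d, (g i j).coeff d ∈ Set.range (⇑(WittVector.teichmuller p (R := k)))) ∧
          (∀ v, (g i j).degreeOf v ≤ q - 1) ∧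
          (g i j).totalDegree ≤ n * m * (q - 1)) ∧
      ∀ Y ∈ B, ∀ A : Fin m → Fin n → k,
        (∀ j, (p : W) ^ m ∣
            Y j - ∑ i : Fin m, (p : W) ^ (i : ℕ) * WittVector.teichmuller p (A i j)) →
        ∀ j, ∀ N : ℕ,
          (p : W) ^ N ∣
            Y j - (∑ i : Fin m, (p : W) ^ (i : ℕ) * WittVector.teichmuller p (A i j)) -
              ∑ i ∈ (Finset.Ico m N).attach,
                MvPolynomial.eval (fun v => WittVector.teichmuller p (A v.1 v.2))
                    (g ⟨i.1, (Finset.mem_Ico.mp i.2).1⟩ j) * (p : W) ^ i.1 := by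
  classical
  subst hq
  -- the Teichmüller lift of the first `m` digits
  have hdigXA : ∀ (x : W) (A : (Fin m × Fin n) → k) (j : Fin n),
      ((p : W) ^ m ∣ x - ∑ i : Fin m, (p : W) ^ (i : ℕ) * τ (A (i, j))
        ↔ ∀ i : Fin m, digit p x (i : ℕ) = A (i, j)) := by
    intro x A j
    set a : ℕ → k := fun i => if h : i < m then A (⟨i, h⟩, j) else 0 with ha
    have hsum : ∑ i ∈ Finset.range m, (p : W) ^ i * τ (a i)
        = ∑ i : Fin m, (p : W) ^ (i : ℕ) * τ (A (i, j)) := by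
      rw [Finset.sum_range]
      apply Finset.sum_congr rfl
      intro i _
      simp [ha, i.is_lt]
    rw [← hsum, dvd_iff_digits]
    constructor
    · intro hd i
      have := hd i.1 i.2
      simpa [ha, i.is_lt] using this
    · intro hd i hi
      simp only [ha, dif_pos hi]
      exact hd ⟨i, hi⟩
  have hdig : ∀ (Y : Fin n → W) (A : (Fin m × Fin n) → k),
      (∀ j, (p : W) ^ m ∣ Y j - ∑ i : Fin m, (p : W) ^ (i : ℕ) * τ (A (i, j)))
        ↔ (fun v => digit p (Y v.2) v.1) = A := by
    intro Y A
    constructor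
    · intro hY
      funext v
      have := (hdigXA (Y v.2) A v.2).mp (hY v.2) v.1
      simpa using this
    · intro hA j
      rw [hdigXA]
      intro i
      rw [← hA]
  have hBfin : Finite B := Nat.finite_of_card_ne_zero
    (by rw [hBcard]; exact pow_ne_zero _ Fintype.card_ne_zero)
  have hsurj : Function.Surjective
      (fun (Y : B) (v : Fin m × Fin n) => digit p (Y.1 v.2) v.1) := by
    intro A
    obtain ⟨Y, hY, hYd⟩ := hBsurj (fun j => ∑ i : Fin m, (p : W) ^ (i : ℕ) * τ (A (i, j)))
    exact ⟨⟨Y, hY⟩, (hdig Y A).mp hYd⟩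
  have hcards : Nat.card B = Nat.card ((Fin m × Fin n) → k) := by
    rw [hBcard, Nat.card_fun, Nat.card_eq_fintype_card, Nat.card_eq_fintype_card,
      Fintype.card_prod, Fintype.card_fin, Fintype.card_fin, Nat.mul_comm n m]
  have hbij := (Nat.bijective_iff_surjective_and_card
    (fun (Y : B) (v : Fin m × Fin n) => digit p (Y.1 v.2) v.1)).mpr ⟨hsurj, hcards⟩
  have hsel : ∀ A : (Fin m × Fin n) → k, ∃ Y, Y ∈ B ∧
      (fun v : Fin m × Fin n => digit p (Y v.2) v.1) = A := by
    intro A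
    obtain ⟨⟨Y, hY⟩, h⟩ := hsurj A
    exact ⟨Y, hY, h⟩
  have hYselB : ∀ A, (hsel A).choose ∈ B := fun A => (hsel A).choose_spec.1
  have hYseld : ∀ A, (fun v : Fin m × Fin n => digit p ((hsel A).choose v.2) v.1) = A :=
    fun A => (hsel A).choose_spec.2
  have hYuniq : ∀ Y, Y ∈ B → ∀ A, (fun v : Fin m × Fin n => digit p (Y v.2) v.1) = A →
      Y = (hsel A).choose := by
    intro Y hY A hYA
    have := hbij.injective (a₁ := ⟨Y, hY⟩) (a₂ := ⟨(hsel A).choose, hYselB A⟩)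
      (hYA.trans (hYseld A).symm)
    exact congrArg Subtype.val this
  have hD : ∀ (A : (Fin m × Fin n) → k) (j : Fin n), ∃ w : W,
      (hsel A).choose j - ∑ i : Fin m, (p : W) ^ (i : ℕ) * τ (A (i, j)) = (p : W) ^ m * w :=
    fun A j => (hdig (hsel A).choose A).mpr (hYseld A) j
  set F0 : ((Fin m × Fin n) → k) → Fin n → W := fun A j => (hD A j).choose with hF0
  have hF0spec : ∀ A j, (hsel A).choose j - ∑ i : Fin m, (p : W) ^ (i : ℕ) * τ (A (i, j))
      = (p : W) ^ m * F0 A j := fun A j => (hD A j).choose_spec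
  -- conditions on the constructed polynomials
  have hGcond : ∀ (i : {i : ℕ // m ≤ i}) (j : Fin n),
      (∀ d, (stagePoly p (stageF p F0 (i.1 - m)) j).coeff d
          ∈ Set.range (⇑(WittVector.teichmuller p (R := k)))) ∧
      (∀ v, (stagePoly p (stageF p F0 (i.1 - m)) j).degreeOf v ≤ Fintype.card k - 1) ∧
      (stagePoly p (stageF p F0 (i.1 - m)) j).totalDegree
        ≤ n * m * (Fintype.card k - 1) := by
    intro i j
    refine ⟨fun d => stagePoly_coeff_mem p _ j d, fun v => stagePoly_degreeOf p _ j v, ?_⟩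
    calc (stagePoly p (stageF p F0 (i.1 - m)) j).totalDegree
        ≤ Fintype.card (Fin m × Fin n) * (Fintype.card k - 1) := stagePoly_totalDegree p _ j
    _ = n * m * (Fintype.card k - 1) := by
        rw [Fintype.card_prod, Fintype.card_fin, Fintype.card_fin]
        ring_nf
  -- main representation property
  have hGmain : ∀ Y, Y ∈ B → ∀ A : Fin m → Fin n → k,
      (∀ j, (p : W) ^ m ∣ Y j - ∑ i : Fin m, (p : W) ^ (i : ℕ) * τ (A i j)) →
      ∀ j, ∀ N : ℕ, (p : W) ^ N ∣
        Y j - (∑ i : Fin m, (p : W) ^ (i : ℕ) * τ (A i j)) -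
          ∑ i ∈ (Finset.Ico m N).attach,
            MvPolynomial.eval (fun v => τ (A v.1 v.2))
              (stagePoly p (stageF p F0 (i.1 - m)) j) * (p : W) ^ i.1 := by
    intro Y hY A hA j N
    have hYeq : Y = (hsel (fun v => A v.1 v.2)).choose := by
      apply hYuniq Y hY
      rw [← hdig]
      intro j'
      exact hA j'
    by_cases hN : N ≤ m
    · rw [Finset.Ico_eq_empty (by omega), Finset.attach_empty, Finset.sum_empty, sub_zero]
      exact dvd_trans (pow_dvd_pow _ hN) (hA j)
    · push_neg at hN
      have hNt : N = m + (N - m) := by omega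
      have hexp := stage_expansion p F0
        (fun A j => (hsel A).choose j - ∑ i : Fin m, (p : W) ^ (i : ℕ) * τ (A (i, j)))
        m hF0spec (N - m) (fun v => A v.1 v.2) j
      simp only [] at hexp
      have hsum2 : ∑ i ∈ (Finset.Ico m N).attach,
            MvPolynomial.eval (fun v => τ (A v.1 v.2))
              (stagePoly p (stageF p F0 (i.1 - m)) j) * (p : W) ^ i.1
          = ∑ s ∈ Finset.range (N - m),
              MvPolynomial.eval (fun v => τ (A v.1 v.2))
                (stagePoly p (stageF p F0 s) j) * (p : W) ^ (m + s) := by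
        rw [Finset.sum_attach (Finset.Ico m N) (fun i =>
          MvPolynomial.eval (fun v => τ (A v.1 v.2))
            (stagePoly p (stageF p F0 (i - m)) j) * (p : W) ^ i)]
        rw [hNt, Finset.sum_Ico_eq_sum_range]
        simp only [Nat.add_sub_cancel_left, Nat.add_sub_cancel]
      have hpN : (p : W) ^ N = (p : W) ^ (m + (N - m)) := by rw [← hNt]
      rw [hsum2, hYeq, hpN]
      exact ⟨stageF p F0 (N - m) (fun v => A v.1 v.2) j, by linear_combination hexp⟩
  refine ⟨fun i j => stagePoly p (stageF p F0 (i.1 - m)) j, ⟨hGcond, hGmain⟩, ?_⟩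
  -- uniqueness
  rintro g2 ⟨hg2cond, hg2main⟩
  have key : ∀ i : ℕ, ∀ hi : m ≤ i, ∀ j : Fin n,
      g2 ⟨i, hi⟩ j = stagePoly p (stageF p F0 (i - m)) j := by
    intro i
    induction i using Nat.strong_induction_on with
    | _ i IH =>
      intro hi j
      apply teichPoly_ext p
      · exact (hg2cond ⟨i, hi⟩ j).1
      · exact fun d => stagePoly_coeff_mem p _ j d
      · exact (hg2cond ⟨i, hi⟩ j).2.1
      · exact fun v => stagePoly_degreeOf p _ j v
      intro A
      have hhyp : ∀ j', (p : W) ^ m ∣ (hsel A).choose j'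
          - ∑ i : Fin m, (p : W) ^ (i : ℕ) * τ ((fun a b => A (a, b)) i j') := by
        intro j'
        simp only [Prod.mk.eta]
        exact (hdig (hsel A).choose A).mpr (hYseld A) j'
      have h1 := hg2main (hsel A).choose (hYselB A) (fun a b => A (a, b)) hhyp j (i + 1)
      have h2 := hGmain (hsel A).choose (hYselB A) (fun a b => A (a, b)) hhyp j (i + 1)
      simp only [Prod.mk.eta] at h1 h2
      have hdiff : (p : W) ^ (i + 1) ∣
          (∑ l ∈ (Finset.Ico m (i + 1)).attach,
            MvPolynomial.eval (fun v => τ (A v)) (g2 ⟨l.1, (Finset.mem_Ico.mp l.2).1⟩ j)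
              * (p : W) ^ l.1)
          - ∑ l ∈ (Finset.Ico m (i + 1)).attach,
            MvPolynomial.eval (fun v => τ (A v)) (stagePoly p (stageF p F0 (l.1 - m)) j)
              * (p : W) ^ l.1 := by
        obtain ⟨c1, hc1⟩ := h1
        obtain ⟨c2, hc2⟩ := h2
        exact ⟨c2 - c1, by rw [mul_sub]; linear_combination hc2 - hc1⟩
      -- rewrite the sums
      have hS2 : ∑ l ∈ (Finset.Ico m (i + 1)).attach,
            MvPolynomial.eval (fun v => τ (A v)) (g2 ⟨l.1, (Finset.mem_Ico.mp l.2).1⟩ j)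
              * (p : W) ^ l.1
          = ∑ l ∈ Finset.Ico m (i + 1), (if h : m ≤ l then
              MvPolynomial.eval (fun v => τ (A v)) (g2 ⟨l, h⟩ j) * (p : W) ^ l else 0) := by
        rw [← Finset.sum_attach (Finset.Ico m (i + 1)) (fun l => if h : m ≤ l then
          MvPolynomial.eval (fun v => τ (A v)) (g2 ⟨l, h⟩ j) * (p : W) ^ l else 0)]
        apply Finset.sum_congr rfl
        intro l _
        rw [dif_pos (Finset.mem_Ico.mp l.2).1]
      have hSG : ∑ l ∈ (Finset.Ico m (i + 1)).attach,
            MvPolynomial.eval (fun v => τ (A v)) (stagePoly p (stageF p F0 (l.1 - m)) j)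
              * (p : W) ^ l.1
          = ∑ l ∈ Finset.Ico m (i + 1),
              MvPolynomial.eval (fun v => τ (A v)) (stagePoly p (stageF p F0 (l - m)) j)
                * (p : W) ^ l :=
        Finset.sum_attach (Finset.Ico m (i + 1)) (fun l =>
          MvPolynomial.eval (fun v => τ (A v)) (stagePoly p (stageF p F0 (l - m)) j)
            * (p : W) ^ l)
      rw [hS2, hSG, Finset.sum_Ico_succ_top hi, Finset.sum_Ico_succ_top hi,
        dif_pos hi] at hdiff
      have hIH : ∑ l ∈ Finset.Ico m i, (if h : m ≤ l then
            MvPolynomial.eval (fun v => τ (A v)) (g2 ⟨l, h⟩ j) * (p : W) ^ l else 0)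
          = ∑ l ∈ Finset.Ico m i,
              MvPolynomial.eval (fun v => τ (A v)) (stagePoly p (stageF p F0 (l - m)) j)
                * (p : W) ^ l := by
        apply Finset.sum_congr rfl
        intro l hl
        obtain ⟨hml, hli⟩ := Finset.mem_Ico.mp hl
        rw [dif_pos hml, IH l hli hml j]
      rw [hIH] at hdiff
      have hdiff2 : (p : W) ^ (i + 1) ∣
          (MvPolynomial.eval (fun v => τ (A v)) (g2 ⟨i, hi⟩ j)
            - MvPolynomial.eval (fun v => τ (A v)) (stagePoly p (stageF p F0 (i - m)) j))
            * (p : W) ^ i := by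
        obtain ⟨c, hc⟩ := hdiff
        exact ⟨c, by rw [sub_mul]; linear_combination hc⟩
      obtain ⟨c, hc⟩ := hdiff2
      have hpd : (p : W) ∣
          MvPolynomial.eval (fun v => τ (A v)) (g2 ⟨i, hi⟩ j)
            - MvPolynomial.eval (fun v => τ (A v)) (stagePoly p (stageF p F0 (i - m)) j) := by
        refine ⟨c, p_pow_regular p i ?_⟩
        rw [pow_succ] at hc
        linear_combination hc
      have := (p_dvd_iff p _).mp hpd
      rw [coeff_zero_eq, map_sub, sub_eq_zero] at this
      exact this
  funext i j
  obtain ⟨i, hi⟩ := i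
  exact key i hi j

end BoxRep



/-- Box representation lemma: a box `𝓑_m ⊆ ℤ_q^n` (`ℤ_q ≅ W(𝔽_q)`, `q = p^h`) with `q^{nm}`
elements reducing onto `(ℤ_q/p^mℤ_q)^n` is represented by a unique system of reduced
Teichmüller polynomials `g_{ij}` (`i ≥ m`, `1 ≤ j ≤ n`) in the `nm` variables `x_{kl}`, of
total degree at most `nm(q−1)`, such that every `Y ∈ 𝓑_m` equals
`X_m + Σ_{i≥m} (g_{i1}(X_m),…,g_{in}(X_m)) p^i`, where `X_m` is the Teichmüller lift of
`Y mod p^m` (i.e. `X_m = Σ_{i<m} τ(A_{ij}) p^i ≡ Y (mod p^m)`). -/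
theorem box_representation_existsUnique (p h m n : ℕ) [Fact p.Prime]
    (hh : 0 < h) (hm : 0 < m) (hn : 0 < n)
    (B : Set (Fin n → WittVector p (GaloisField p h)))
    (hBcard : Nat.card B = (p ^ h) ^ (n * m))
    (hBsurj : ∀ z : Fin n → WittVector p (GaloisField p h),
      ∃ Y ∈ B, ∀ j, (p : WittVector p (GaloisField p h)) ^ m ∣ Y j - z j) :
    ∃! g : {i : ℕ // m ≤ i} → Fin n →
        MvPolynomial (Fin m × Fin n) (WittVector p (GaloisField p h)),
      (∀ i j,
          (∀ d, (g i j).coeff d ∈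
              Set.range (⇑(WittVector.teichmuller p (R := GaloisField p h)))) ∧
          (∀ v, (g i j).degreeOf v ≤ p ^ h - 1) ∧
          (g i j).totalDegree ≤ n * m * (p ^ h - 1)) ∧
      ∀ Y ∈ B, ∀ A : Fin m → Fin n → GaloisField p h,
        (∀ j, (p : WittVector p (GaloisField p h)) ^ m ∣
            Y j - ∑ i : Fin m,
              (p : WittVector p (GaloisField p h)) ^ (i : ℕ) *
                WittVector.teichmuller p (A i j)) →
        ∀ j, ∀ N : ℕ,
          (p : WittVector p (GaloisField p h)) ^ N ∣
            Y j -
              (∑ i : Fin m,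
                (p : WittVector p (GaloisField p h)) ^ (i : ℕ) *
                  WittVector.teichmuller p (A i j)) -
              ∑ i ∈ (Finset.Ico m N).attach,
                MvPolynomial.eval (fun v => WittVector.teichmuller p (A v.1 v.2))
                    (g ⟨i.1, (Finset.mem_Ico.mp i.2).1⟩ j) *
                  (p : WittVector p (GaloisField p h)) ^ i.1 := by
  haveI : Fintype (GaloisField p h) := Fintype.ofFinite _
  have hcard : Fintype.card (GaloisField p h) = p ^ h := by
    rw [← Nat.card_eq_fintype_card]
    exact GaloisField.card p h hh.ne'
  exact BoxRep.main p (p ^ h) m n hcard hm B hBcard hBsurj
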